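/- Let G = (V, F, w) be a weighted multigraph, let t > 0, and let F_{≥t} := {f ∈ F : w(f) > 0 and k_f ≥ t}, where k_f denotes strength in G. Let A ⊆ V be the vertex set of a connected component of the graph (V, F_{≥t}). Then for every edge f ∈ F_{≥t} with both endpoints in A, the strength of f in the weighted multigraph (A, {g ∈ F_{≥t} : g ⊆ A}, w) equals k_f, its strength in G. -/

import Mathlib

open Finset
open scoped Classical

/-- An edge `f` crosses the cut `S` if exactly one of its endpoints lies in `S`. -/
def crossesCut {V F : Type} (ep : F → V × V) (S : Finset V) (f : F) : Prop :=
  ((ep f).1 ∈ S ∧ (ep f).2 ∉ S) ∨ ((ep f).1 ∉ S ∧ (ep f).2 ∈ S)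

/-- Total weight of edges of the induced subgraph `G[X]` crossing the cut `S`. -/
noncomputable def cutWt {V F : Type} [Fintype F] (ep : F → V × V) (w : F → ℝ)
    (X S : Finset V) : ℝ :=
  ∑ f : F, if (ep f).1 ∈ X ∧ (ep f).2 ∈ X ∧ crossesCut ep S f then w f else 0

/-- The min-cut of the induced subgraph `G[X]`: the least total weight of edges of `G[X]`
crossing a cut `(S, X \ S)` with `∅ ⊊ S ⊊ X`. -/
noncomputable def minCutIn {V F : Type} [Fintype F] (ep : F → V × V) (w : F → ℝ)
    (X : Finset V) : ℝ :=
  sInf {c : ℝ | ∃ S : Finset V, S ⊆ X ∧ S.Nonempty ∧ S ≠ X ∧ c = cutWt ep w X S}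

/-- The strength of an edge `f`: the maximum of the min-cut of `G[X]` over all vertex
sets `X` containing both endpoints of `f`. -/
noncomputable def strength {V F : Type} [Fintype V] [Fintype F] (ep : F → V × V)
    (w : F → ℝ) (f : F) : ℝ :=
  sSup {c : ℝ | ∃ X : Finset V, (ep f).1 ∈ X ∧ (ep f).2 ∈ X ∧ c = minCutIn ep w X}


section Helpers
variable {V F : Type} [Fintype F] (ep : F → V × V)

lemma cutWt_nonneg (w : F → ℝ) (hw : ∀ f, 0 ≤ w f) (X S : Finset V) :
    0 ≤ cutWt ep w X S :=
  Finset.sum_nonneg fun f _ => by split_ifs; exacts [hw f, le_rfl]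

lemma cutWt_le_total (w : F → ℝ) (hw : ∀ f, 0 ≤ w f) (X S : Finset V) :
    cutWt ep w X S ≤ ∑ f, w f :=
  Finset.sum_le_sum fun f _ => by split_ifs; exacts [le_rfl, hw f]

lemma cut_set_lb (w : F → ℝ) (hw : ∀ f, 0 ≤ w f) (X : Finset V) :
    ∀ c ∈ {c : ℝ | ∃ S : Finset V, S ⊆ X ∧ S.Nonempty ∧ S ≠ X ∧ c = cutWt ep w X S}, 0 ≤ c := by
  rintro c ⟨S, -, -, -, rfl⟩; exact cutWt_nonneg ep w hw X S

lemma minCutIn_le_cutWt (w : F → ℝ) (hw : ∀ f, 0 ≤ w f) (X S : Finset V)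
    (hS : S ⊆ X) (h1 : S.Nonempty) (h2 : S ≠ X) :
    minCutIn ep w X ≤ cutWt ep w X S :=
  csInf_le ⟨0, cut_set_lb ep w hw X⟩ ⟨S, hS, h1, h2, rfl⟩

lemma minCutIn_le_total (w : F → ℝ) (hw : ∀ f, 0 ≤ w f) (X : Finset V) :
    minCutIn ep w X ≤ ∑ f, w f := by
  by_cases h : {c : ℝ | ∃ S : Finset V, S ⊆ X ∧ S.Nonempty ∧ S ≠ X ∧ c = cutWt ep w X S}.Nonempty
  · obtain ⟨c, S, hS, h1, h2, rfl⟩ := h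
    exact (minCutIn_le_cutWt ep w hw X S hS h1 h2).trans (cutWt_le_total ep w hw X S)
  · rw [minCutIn, Set.not_nonempty_iff_eq_empty.mp h, Real.sInf_empty]
    exact Finset.sum_nonneg fun f _ => hw f

lemma minCutIn_mono (w w' : F → ℝ) (hw' : ∀ f, 0 ≤ w' f) (hle : ∀ f, w' f ≤ w f)
    (X : Finset V) : minCutIn ep w' X ≤ minCutIn ep w X := by
  by_cases h : {c : ℝ | ∃ S : Finset V, S ⊆ X ∧ S.Nonempty ∧ S ≠ X ∧ c = cutWt ep w X S}.Nonempty
  · apply le_csInf h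
    rintro c ⟨S, hS, h1, h2, rfl⟩
    exact (minCutIn_le_cutWt ep w' hw' X S hS h1 h2).trans
      (Finset.sum_le_sum fun f _ => by split_ifs; exacts [hle f, le_rfl])
  · have h' : {c : ℝ | ∃ S : Finset V, S ⊆ X ∧ S.Nonempty ∧ S ≠ X ∧ c = cutWt ep w' X S} = ∅ := by
      rw [Set.eq_empty_iff_forall_notMem]
      rintro c ⟨S, hS, h1, h2, rfl⟩
      exact h ⟨_, S, hS, h1, h2, rfl⟩
    rw [minCutIn, minCutIn, h', Set.not_nonempty_iff_eq_empty.mp h]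

lemma minCutIn_congr (w w' : F → ℝ) (X : Finset V)
    (h : ∀ g, (ep g).1 ∈ X → (ep g).2 ∈ X → w' g = w g) :
    minCutIn ep w' X = minCutIn ep w X := by
  have hc : ∀ S : Finset V, cutWt ep w' X S = cutWt ep w X S := by
    intro S
    refine Finset.sum_congr rfl fun g _ => ?_
    split_ifs with hg
    · exact h g hg.1 hg.2.1
    · rfl
  simp only [minCutIn, hc]

lemma strength_bddAbove {V : Type} [Fintype V] (ep : F → V × V) (w : F → ℝ)
    (hw : ∀ f, 0 ≤ w f) (f : F) :
    BddAbove {c : ℝ | ∃ X : Finset V, (ep f).1 ∈ X ∧ (ep f).2 ∈ X ∧ c = minCutIn ep w X} := by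
  refine ⟨∑ g, w g, ?_⟩
  rintro c ⟨X, -, -, rfl⟩
  exact minCutIn_le_total ep w hw X

end Helpers

/-- Let `t > 0`, let `F_{≥ t}` be the positive-weight edges of strength at
least `t`, and let `A` be the vertex set of a connected component of the graph `(V, F_{≥ t})`.
Then for every edge `f ∈ F_{≥ t}` with both endpoints in `A`, the strength of `f` computed in
the weighted multigraph `(A, {g ∈ F_{≥ t} : g ⊆ A}, w)` (formalized as the supremum of the
min-cuts of induced subgraphs `X ⊆ A` with respect to the weights zeroed outside `F_{≥ t}`)
equals `k_f`, the strength of `f` in `G`. -/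
theorem stmt14 {V F : Type} [Fintype V] [Fintype F]
    (ep : F → V × V) (hep : ∀ f, (ep f).1 ≠ (ep f).2)
    (w : F → ℝ) (hw : ∀ f, 0 ≤ w f)
    (t : ℝ) (ht : 0 < t)
    (A : Finset V)
    (hA : ∃ v₀ : V, ∀ u : V, u ∈ A ↔
      (SimpleGraph.fromRel (fun a b =>
        ∃ g : F, 0 < w g ∧ t ≤ strength ep w g ∧ ep g = (a, b))).Reachable v₀ u)
    (f : F) (hfw : 0 < w f) (hft : t ≤ strength ep w f)
    (hfA1 : (ep f).1 ∈ A) (hfA2 : (ep f).2 ∈ A) :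
    sSup {c : ℝ | ∃ X : Finset V, X ⊆ A ∧ (ep f).1 ∈ X ∧ (ep f).2 ∈ X ∧
        c = minCutIn ep (fun g => if 0 < w g ∧ t ≤ strength ep w g then w g else 0) X}
      = strength ep w f := by
  classical
  set w' : F → ℝ := fun g => if 0 < w g ∧ t ≤ strength ep w g then w g else 0 with hw'def
  have hw'0 : ∀ g, 0 ≤ w' g := fun g => by
    simp only [hw'def]; split_ifs with h; exacts [h.1.le, le_rfl]
  have hw'le : ∀ g, w' g ≤ w g := fun g => by
    simp only [hw'def]; split_ifs; exacts [le_rfl, hw g]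
  apply le_antisymm
  · refine csSup_le ⟨_, A, Finset.Subset.rfl, hfA1, hfA2, rfl⟩ ?_
    rintro c ⟨X, hXA, h1, h2, rfl⟩
    exact (minCutIn_mono ep w w' hw'0 hw'le X).trans
      (le_csSup (strength_bddAbove ep w hw f) ⟨X, h1, h2, rfl⟩)
  · -- the strength supremum is attained at some X₀
    have hmem : strength ep w f ∈
        {c : ℝ | ∃ X : Finset V, (ep f).1 ∈ X ∧ (ep f).2 ∈ X ∧ c = minCutIn ep w X} := by
      rw [strength]
      refine Set.Nonempty.csSup_mem ⟨_, Finset.univ, Finset.mem_univ _, Finset.mem_univ _, rfl⟩ ?_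
      refine Set.Finite.subset (Set.finite_range fun X : Finset V => minCutIn ep w X) ?_
      rintro c ⟨X, -, -, rfl⟩; exact ⟨X, rfl⟩
    obtain ⟨X₀, hX1, hX2, hk⟩ := hmem
    -- every edge inside X₀ has strength ≥ minCut(G[X₀]) = strength f
    have hstr : ∀ g, (ep g).1 ∈ X₀ → (ep g).2 ∈ X₀ → minCutIn ep w X₀ ≤ strength ep w g :=
      fun g h1 h2 => le_csSup (strength_bddAbove ep w hw g) ⟨X₀, h1, h2, rfl⟩
    have ht' : t ≤ minCutIn ep w X₀ := hk ▸ hft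
    -- X₀ ⊆ A
    obtain ⟨v₀, hv₀⟩ := hA
    set G' := SimpleGraph.fromRel (fun a b =>
        ∃ g : F, 0 < w g ∧ t ≤ strength ep w g ∧ ep g = (a, b)) with hG'
    have hXA : X₀ ⊆ A := by
      set S₀ : Finset V := X₀.filter (fun u => G'.Reachable v₀ u) with hS₀def
      have hS₀sub : S₀ ⊆ X₀ := Finset.filter_subset _ _
      have hS₀ne : S₀.Nonempty :=
        ⟨(ep f).1, Finset.mem_filter.mpr ⟨hX1, (hv₀ _).mp hfA1⟩⟩
      have hS₀eq : S₀ = X₀ := by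
        by_contra hne
        have hcut : 0 < cutWt ep w X₀ S₀ :=
          lt_of_lt_of_le ht (ht'.trans (minCutIn_le_cutWt ep w hw X₀ S₀ hS₀sub hS₀ne hne))
        have hsum : (∑ _g : F, (0:ℝ)) <
            ∑ g : F, if (ep g).1 ∈ X₀ ∧ (ep g).2 ∈ X₀ ∧ crossesCut ep S₀ g then w g else 0 := by
          rw [Finset.sum_const_zero]; exact hcut
        obtain ⟨g, -, hg⟩ := Finset.exists_lt_of_sum_lt hsum
        by_cases hc : (ep g).1 ∈ X₀ ∧ (ep g).2 ∈ X₀ ∧ crossesCut ep S₀ g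
        · obtain ⟨hg1, hg2, hcross⟩ := hc
          rw [if_pos ⟨hg1, hg2, hcross⟩] at hg
          have hgt : t ≤ strength ep w g := ht'.trans (hstr g hg1 hg2)
          have hadj : G'.Adj (ep g).1 (ep g).2 := by
            rw [hG', SimpleGraph.fromRel_adj]
            exact ⟨hep g, Or.inl ⟨g, hg, hgt, rfl⟩⟩
          rcases hcross with ⟨hin, hout⟩ | ⟨hout, hin⟩
          · have hr : G'.Reachable v₀ (ep g).1 := (Finset.mem_filter.mp (by
              rw [← hS₀def] at *; exact hin)).2
            exact hout (Finset.mem_filter.mpr ⟨hg2, hr.trans hadj.reachable⟩)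
          · have hr : G'.Reachable v₀ (ep g).2 := (Finset.mem_filter.mp hin).2
            exact hout (Finset.mem_filter.mpr ⟨hg1, hr.trans hadj.symm.reachable⟩)
        · rw [if_neg hc] at hg; exact absurd hg (lt_irrefl 0)
      intro u hu
      exact (hv₀ u).mpr (Finset.mem_filter.mp (hS₀eq ▸ hu)).2
    -- on X₀ the weights agree
    have weq : minCutIn ep w' X₀ = minCutIn ep w X₀ := by
      refine minCutIn_congr ep w w' X₀ fun g h1 h2 => ?_
      by_cases hg : 0 < w g
      · simp only [hw'def]; rw [if_pos ⟨hg, ht'.trans (hstr g h1 h2)⟩]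
      · have hg0 : w g = 0 := le_antisymm (not_lt.mp hg) (hw g)
        simp only [hw'def, hg0, if_neg, lt_irrefl]
        rw [if_neg (by simp [hg0])]
    have hbdd : BddAbove {c : ℝ | ∃ X : Finset V, X ⊆ A ∧ (ep f).1 ∈ X ∧ (ep f).2 ∈ X ∧
        c = minCutIn ep w' X} := by
      refine ⟨∑ g, w g, ?_⟩
      rintro c ⟨X, -, -, -, rfl⟩
      exact (minCutIn_mono ep w w' hw'0 hw'le X).trans (minCutIn_le_total ep w hw X)
    calc strength ep w f = minCutIn ep w' X₀ := by rw [hk, weq]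
      _ ≤ _ := le_csSup hbdd ⟨X₀, hXA, hX1, hX2, rfl⟩
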